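/- Let G be a simple graph with a matching M, and let M' be a matching in G with |M'| > |M|. Then the symmetric difference M Δ M' contains an M-augmenting path. -/

import Mathlib

/-- `M` is a matching in the simple graph `G`. -/
def IsMatchingOn {V : Type*} (G : SimpleGraph V) (M : Finset (Sym2 V)) : Prop :=
  (∀ e ∈ M, e ∈ G.edgeSet) ∧
  ∀ e ∈ M, ∀ f ∈ M, e ≠ f → ∀ v : V, v ∈ e → v ∉ f

/-- `p` is an `M`-augmenting path. -/
def IsAugPath {V : Type*} (G : SimpleGraph V) (M : Finset (Sym2 V)) {u v : V}
    (p : G.Walk u v) : Prop :=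
  p.IsPath ∧ Odd p.edges.length ∧
  (∀ e ∈ M, u ∉ e) ∧ (∀ e ∈ M, v ∉ e) ∧
  ∀ i : ℕ, ∀ hi : i < p.edges.length, (p.edges.get ⟨i, hi⟩ ∈ M ↔ Odd i)

namespace BergeAux

variable {V : Type*} {G : SimpleGraph V}

lemma start_mem_first_edge {a b : V} (p : G.Walk a b)
    (h : 0 < p.edges.length) : a ∈ p.edges.get ⟨0, h⟩ := by
  cases p with
  | nil => simp at h
  | cons h q => simp

lemma end_mem_last_edge' {a b : V} (p : G.Walk a b)
    (h : p.edges.length - 1 < p.edges.length) :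
    b ∈ p.edges[p.edges.length - 1]'h := by
  induction p with
  | nil => simp at h
  | cons ha q ih =>
    cases q with
    | nil => simp
    | cons hb r =>
      obtain ⟨m, hm⟩ : ∃ m, (SimpleGraph.Walk.cons hb r).edges.length = m + 1 :=
        ⟨r.edges.length, by simp⟩
      have ih' := ih (by omega)
      simp only [SimpleGraph.Walk.edges_cons (G := G), List.length_cons, hm,
        Nat.add_sub_cancel, List.getElem_cons_succ] at ih' ⊢
      exact ih'

lemma end_mem_last_edge {a b : V} (p : G.Walk a b)
    (h : p.edges.length - 1 < p.edges.length) :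
    b ∈ p.edges.get ⟨p.edges.length - 1, h⟩ := by
  simpa [List.get_eq_getElem] using end_mem_last_edge' p h

lemma internal_mem_M {M : Finset (Sym2 V)} {a b : V} (p : G.Walk a b)
    (halt : ∀ i (hi : i < p.edges.length), (p.edges.get ⟨i, hi⟩ ∈ M ↔ Odd i))
    {v : V} (hv : v ∈ p.support) (hva : v ≠ a) (hvb : v ≠ b) :
    ∃ g ∈ p.edges, g ∈ M ∧ v ∈ g := by
  obtain ⟨q, r, rfl⟩ := (SimpleGraph.Walk.mem_support_iff_exists_append).mp hv
  have hq : 0 < q.edges.length := by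
    rw [SimpleGraph.Walk.length_edges]
    rcases Nat.eq_zero_or_pos q.length with h0 | h
    · exact absurd (SimpleGraph.Walk.eq_of_length_eq_zero h0).symm hva
    · exact h
  have hr : 0 < r.edges.length := by
    rw [SimpleGraph.Walk.length_edges]
    rcases Nat.eq_zero_or_pos r.length with h0 | h
    · exact absurd (SimpleGraph.Walk.eq_of_length_eq_zero h0) hvb
    · exact h
  have hed : (q.append r).edges = q.edges ++ r.edges := SimpleGraph.Walk.edges_append q r
  have hlen : (q.append r).edges.length = q.edges.length + r.edges.length := by
    rw [hed, List.length_append]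
  rcases Nat.even_or_odd q.edges.length with hk | hk
  · -- q.edges.length even: use index q.edges.length - 1, which is odd
    have hi : q.edges.length - 1 < (q.append r).edges.length := by omega
    have hodd : Odd (q.edges.length - 1) := by
      rcases hk with ⟨t, ht⟩
      exact ⟨t - 1, by omega⟩
    have hget : (q.append r).edges[q.edges.length - 1]'hi
        = q.edges[q.edges.length - 1]'(by omega) := by
      rw [List.getElem_of_eq hed, List.getElem_append_left (by omega)]
    refine ⟨(q.append r).edges.get ⟨q.edges.length - 1, hi⟩, List.get_mem _ _, ?_, ?_⟩
    · exact (halt _ hi).mpr hodd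
    · simp only [List.get_eq_getElem, hget]
      exact end_mem_last_edge' q (by omega)
  · -- q.edges.length odd: use index q.edges.length, the first edge of r
    have hi : q.edges.length < (q.append r).edges.length := by omega
    have hget : (q.append r).edges[q.edges.length]'hi
        = r.edges[0]'(by omega) := by
      rw [List.getElem_of_eq hed, List.getElem_append_right (le_refl _)]
      simp
    refine ⟨(q.append r).edges.get ⟨q.edges.length, hi⟩, List.get_mem _ _, ?_, ?_⟩
    · exact (halt _ hi).mpr hk
    · simp only [List.get_eq_getElem, hget]
      have := start_mem_first_edge r (by omega)
      simpa [List.get_eq_getElem] using this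

lemma isAugPath_reverse {M : Finset (Sym2 V)} {u v : V} {p : G.Walk u v}
    (h : IsAugPath G M p) : IsAugPath G M p.reverse := by
  obtain ⟨hpath, hodd, hu, hv, halt⟩ := h
  have hlen : p.reverse.edges.length = p.edges.length := by
    rw [SimpleGraph.Walk.edges_reverse, List.length_reverse]
  refine ⟨hpath.reverse, by rwa [hlen], hv, hu, ?_⟩
  intro i hi
  have hi' : i < p.edges.length := by omega
  have hj : p.edges.length - 1 - i < p.edges.length := by omega
  have hget : p.reverse.edges.get ⟨i, hi⟩ = p.edges.get ⟨p.edges.length - 1 - i, hj⟩ := by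
    simp only [List.get_eq_getElem]
    rw [List.getElem_of_eq (SimpleGraph.Walk.edges_reverse p), List.getElem_reverse]
  rw [hget, halt _ hj]
  have heven : Even (p.edges.length - 1) := by
    rcases hodd with ⟨t, ht⟩
    exact ⟨t, by omega⟩
  rcases heven with ⟨s, hs⟩
  constructor
  · rintro ⟨t, ht⟩
    exact ⟨s - t - 1, by omega⟩
  · rintro ⟨t, ht⟩
    exact ⟨s - t - 1, by omega⟩

variable [DecidableEq V]

def ends (e : Sym2 V) : Finset V :=
  Sym2.lift ⟨fun x y => {x, y}, fun x y => Finset.pair_comm x y⟩ e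

lemma mem_ends {v : V} {e : Sym2 V} : v ∈ ends e ↔ v ∈ e := by
  induction e using Sym2.ind with
  | _ x y => simp [ends, Sym2.mem_iff]

lemma card_ends {e : Sym2 V} (he : ¬ e.IsDiag) : (ends e).card = 2 := by
  induction e using Sym2.ind with
  | _ x y =>
    rw [Sym2.mk_isDiag_iff] at he
    simp [ends, Finset.card_pair he]

lemma card_biUnion_ends {M : Finset (Sym2 V)} (hM : IsMatchingOn G M) :
    (M.biUnion ends).card = 2 * M.card := by
  rw [Finset.card_biUnion]
  · rw [Finset.sum_congr rfl
      (fun e he => card_ends (SimpleGraph.not_isDiag_of_mem_edgeSet G (hM.1 e he)))]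
    simp [Finset.sum_const, Nat.mul_comm]
  · intro e he f hf hef
    rw [Function.onFun, Finset.disjoint_left]
    intro v hv hv'
    exact hM.2 e he f hf hef v (mem_ends.mp hv) (mem_ends.mp hv')

lemma exists_unsat {M M' : Finset (Sym2 V)} (hM : IsMatchingOn G M) (hM' : IsMatchingOn G M')
    (hcard : M.card < M'.card) :
    ∃ (e' : Sym2 V) (u : V), e' ∈ M' ∧ u ∈ e' ∧ ∀ f ∈ M, u ∉ f := by
  by_contra hc
  push_neg at hc
  have hsub : M'.biUnion ends ⊆ M.biUnion ends := by
    intro v hv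
    rw [Finset.mem_biUnion] at hv ⊢
    obtain ⟨e', he', hve⟩ := hv
    obtain ⟨f, hf, hvf⟩ := hc e' v he' (mem_ends.mp hve)
    exact ⟨f, hf, mem_ends.mpr hvf⟩
  have := Finset.card_le_card hsub
  rw [card_biUnion_ends hM, card_biUnion_ends hM'] at this
  omega

/-- The core inductive step. -/
lemma berge_core (M M' : Finset (Sym2 V))
    (ih : ∀ N N' : Finset (Sym2 V), N.card < M.card → IsMatchingOn G N → IsMatchingOn G N' →
      N.card < N'.card → ∃ (a b : V) (p : G.Walk a b), IsAugPath G N p ∧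
        ∀ e ∈ p.edges, e ∈ (N \ N') ∪ (N' \ N))
    (hM : IsMatchingOn G M) (hM' : IsMatchingOn G M') (hcard : M.card < M'.card) :
    ∃ (u v : V) (p : G.Walk u v), IsAugPath G M p ∧
      ∀ e ∈ p.edges, e ∈ (M \ M') ∪ (M' \ M) := by
  obtain ⟨e', u, he'M', hue', huunsat⟩ := exists_unsat hM hM' hcard
  obtain ⟨w, rfl⟩ := Sym2.mem_iff_exists.mp hue'
  have hGe' : s(u, w) ∈ G.edgeSet := hM'.1 _ he'M'
  have hadj : G.Adj u w := hGe'
  have hune : u ≠ w := hadj.ne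
  have he'M : s(u, w) ∉ M := fun h => huunsat _ h (Sym2.mem_mk_left u w)
  by_cases hw : ∃ f ∈ M, w ∈ f
  · -- w is M-saturated; erase the M-edge at w and the edge s(u,w), recurse.
    obtain ⟨f, hfM, hwf⟩ := hw
    obtain ⟨x, rfl⟩ := Sym2.mem_iff_exists.mp hwf
    have hGf : s(w, x) ∈ G.edgeSet := hM.1 _ hfM
    have hadj2 : G.Adj w x := hGf
    have hwx : w ≠ x := hadj2.ne
    have hfne : s(u, w) ≠ s(w, x) := fun h => he'M (h ▸ hfM)
    have hfM' : s(w, x) ∉ M' := fun h =>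
      hM'.2 _ he'M' _ h hfne w (Sym2.mem_mk_right u w) (Sym2.mem_mk_left w x)
    set M₀ := M.erase s(w, x) with hM₀def
    set M₀' := M'.erase s(u, w) with hM₀'def
    have hM₀sub : M₀ ⊆ M := Finset.erase_subset _ _
    have hM₀'sub : M₀' ⊆ M' := Finset.erase_subset _ _
    have hM₀ : IsMatchingOn G M₀ :=
      ⟨fun e he => hM.1 e (hM₀sub he),
       fun e he g hg => hM.2 e (hM₀sub he) g (hM₀sub hg)⟩
    have hM₀' : IsMatchingOn G M₀' :=
      ⟨fun e he => hM'.1 e (hM₀'sub he),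
       fun e he g hg => hM'.2 e (hM₀'sub he) g (hM₀'sub hg)⟩
    have hcard₀ : M₀.card < M.card := Finset.card_erase_lt_of_mem hfM
    have hcard₀' : M₀.card < M₀'.card := by
      have h1 : M₀.card = M.card - 1 := Finset.card_erase_of_mem hfM
      have h2 : M₀'.card = M'.card - 1 := Finset.card_erase_of_mem he'M'
      have : 0 < M.card := Finset.card_pos.mpr ⟨_, hfM⟩
      omega
    obtain ⟨a, b, p, haug₀, hpΔ₀⟩ := ih M₀ M₀' hcard₀ hM₀ hM₀' hcard₀'
    obtain ⟨hp_path, hp_odd, hpa, hpb, hp_alt⟩ := haug₀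
    have hp_pos : 0 < p.edges.length := by
      rcases hp_odd with ⟨t, ht⟩; omega
    -- basic facts about Δ₀ membership
    have hΔ₀ : ∀ e ∈ p.edges, (e ∈ M₀ ∧ e ∉ M') ∨ (e ∈ M₀' ∧ e ∉ M) := by
      intro e he
      rcases Finset.mem_union.mp (hpΔ₀ e he) with h | h
      · rcases Finset.mem_sdiff.mp h with ⟨h1, h2⟩
        left
        refine ⟨h1, fun hc => h2 (Finset.mem_erase.mpr ⟨?_, hc⟩)⟩
        intro hc2
        exact he'M (hM₀sub (hc2 ▸ h1))
      · rcases Finset.mem_sdiff.mp h with ⟨h1, h2⟩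
        right
        have h1' : e ∈ M' := hM₀'sub h1
        have hef : e ≠ s(w, x) := fun hc => hfM' (hc ▸ h1')
        exact ⟨h1, fun hc => h2 (Finset.mem_erase.mpr ⟨hef, hc⟩)⟩
    have hpf : s(w, x) ∉ p.edges := by
      intro hc
      rcases hΔ₀ _ hc with ⟨h1, _⟩ | ⟨h1, _⟩
      · exact (Finset.mem_erase.mp h1).1 rfl
      · exact hfM' (hM₀'sub h1)
    have hpe' : s(u, w) ∉ p.edges := by
      intro hc
      rcases hΔ₀ _ hc with ⟨h1, _⟩ | ⟨h1, _⟩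
      · exact he'M (hM₀sub h1)
      · exact (Finset.mem_erase.mp h1).1 rfl
    have hMM₀ : ∀ e ∈ p.edges, (e ∈ M₀ ↔ e ∈ M) := by
      intro e he
      constructor
      · exact fun h => hM₀sub h
      · intro h
        refine Finset.mem_erase.mpr ⟨?_, h⟩
        intro hc
        exact hpf (hc ▸ he)
    -- edges of p are in the symmetric difference of M and M'
    have hpΔ : ∀ e ∈ p.edges, e ∈ (M \ M') ∪ (M' \ M) := by
      intro e he
      rcases hΔ₀ _ he with ⟨h1, h2⟩ | ⟨h1, h2⟩
      · exact Finset.mem_union_left _ (Finset.mem_sdiff.mpr ⟨hM₀sub h1, h2⟩)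
      · exact Finset.mem_union_right _ (Finset.mem_sdiff.mpr ⟨hM₀'sub h1, h2⟩)
    -- the first and last edges of p are in M' and contain the endpoints
    have hfirst : p.edges.get ⟨0, hp_pos⟩ ∈ M' ∧ a ∈ p.edges.get ⟨0, hp_pos⟩ := by
      have hmem : p.edges.get ⟨0, hp_pos⟩ ∈ p.edges := List.get_mem _ _
      have hnot : p.edges.get ⟨0, hp_pos⟩ ∉ M₀ := by
        rw [hp_alt 0 hp_pos]
        simp [Nat.odd_iff]
      rcases hΔ₀ _ hmem with ⟨h1, _⟩ | ⟨h1, _⟩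
      · exact absurd h1 hnot
      · exact ⟨hM₀'sub h1, start_mem_first_edge p hp_pos⟩
    have hlastlt : p.edges.length - 1 < p.edges.length := by omega
    have hlast : p.edges.get ⟨p.edges.length - 1, hlastlt⟩ ∈ M' ∧
        b ∈ p.edges.get ⟨p.edges.length - 1, hlastlt⟩ := by
      have hmem : p.edges.get ⟨p.edges.length - 1, hlastlt⟩ ∈ p.edges := List.get_mem _ _
      have heven : Even (p.edges.length - 1) := by
        rcases hp_odd with ⟨t, ht⟩; exact ⟨t, by omega⟩
      have hnot : p.edges.get ⟨p.edges.length - 1, hlastlt⟩ ∉ M₀ := by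
        rw [hp_alt _ hlastlt]
        rw [Nat.odd_iff, Nat.even_iff] at *
        omega
      rcases hΔ₀ _ hmem with ⟨h1, _⟩ | ⟨h1, _⟩
      · exact absurd h1 hnot
      · exact ⟨hM₀'sub h1, end_mem_last_edge p hlastlt⟩
    -- w is not on p
    have hwp : w ∉ p.support := by
      intro hwsup
      by_cases hwa : w = a
      · exact hM'.2 _ he'M' _ hfirst.1
          (fun hc => hpe' (hc ▸ (List.get_mem _ _))) w (Sym2.mem_mk_right u w)
          (hwa ▸ hfirst.2)
      by_cases hwb : w = b
      · exact hM'.2 _ he'M' _ hlast.1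
          (fun hc => hpe' (hc ▸ (List.get_mem _ _))) w (Sym2.mem_mk_right u w)
          (hwb ▸ hlast.2)
      obtain ⟨g, hgp, hgM₀, hwg⟩ := internal_mem_M p hp_alt hwsup hwa hwb
      exact hM.2 _ hfM g (hM₀sub hgM₀)
        (fun hc => hpf (hc ▸ hgp)) w (Sym2.mem_mk_left w x) hwg
    -- u is not on p
    have hup : u ∉ p.support := by
      intro husup
      by_cases hua : u = a
      · exact hM'.2 _ he'M' _ hfirst.1
          (fun hc => hpe' (hc ▸ (List.get_mem _ _))) u (Sym2.mem_mk_left u w)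
          (hua ▸ hfirst.2)
      by_cases hub : u = b
      · exact hM'.2 _ he'M' _ hlast.1
          (fun hc => hpe' (hc ▸ (List.get_mem _ _))) u (Sym2.mem_mk_left u w)
          (hub ▸ hlast.2)
      obtain ⟨g, hgp, hgM₀, hug⟩ := internal_mem_M p hp_alt husup hua hub
      exact huunsat g (hM₀sub hgM₀) hug
    by_cases hax : a = x ∨ b = x
    · -- extend the path through f and e'
      have key : ∃ (c : V) (P : G.Walk x c), IsAugPath G M₀ P ∧
          (∀ e ∈ P.edges, e ∈ p.edges) ∧ (∀ z, z ∈ P.support → z ∈ p.support) ∧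
          (∀ e ∈ M₀, c ∉ e) := by
        rcases hax with h | h
        · subst h
          exact ⟨b, p, ⟨hp_path, hp_odd, hpa, hpb, hp_alt⟩, fun e he => he,
            fun z hz => hz, hpb⟩
        · subst h
          refine ⟨a, p.reverse, isAugPath_reverse ⟨hp_path, hp_odd, hpa, hpb, hp_alt⟩,
            ?_, ?_, hpa⟩
          · intro e he
            rwa [SimpleGraph.Walk.edges_reverse, List.mem_reverse] at he
          · intro z hz
            rwa [SimpleGraph.Walk.support_reverse, List.mem_reverse] at hz
      obtain ⟨c, P, hPaug, hPed, hPsup, hcM₀⟩ := key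
      obtain ⟨hP_path, hP_odd, hPx, hPc, hP_alt⟩ := hPaug
      have hwP : w ∉ P.support := fun h => hwp (hPsup _ h)
      have huP : u ∉ P.support := fun h => hup (hPsup _ h)
      have hcx : c ≠ x := by
        intro h
        subst h
        rw [SimpleGraph.Walk.isPath_iff_eq_nil] at hP_path
        subst hP_path
        simp only [SimpleGraph.Walk.edges_nil, List.length_nil] at hP_odd
        simp [Nat.odd_iff] at hP_odd
      have hcP : c ∈ P.support := SimpleGraph.Walk.end_mem_support P
      have hcw : c ≠ w := fun h => hwP (h ▸ hcP)
      have hcu : c ≠ u := fun h => huP (h ▸ hcP)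
      -- the new walk
      refine ⟨u, c, SimpleGraph.Walk.cons hadj (SimpleGraph.Walk.cons hadj2 P), ?_, ?_⟩
      · refine ⟨?_, ?_, huunsat, ?_, ?_⟩
        · refine SimpleGraph.Walk.IsPath.cons (SimpleGraph.Walk.IsPath.cons hP_path hwP) ?_
          rw [SimpleGraph.Walk.support_cons]
          intro hc
          rcases List.mem_cons.mp hc with h | h
          · exact hune h
          · exact huP h
        · simp only [SimpleGraph.Walk.edges_cons, List.length_cons]
          rcases hP_odd with ⟨t, ht⟩
          exact ⟨t + 1, by omega⟩
        · -- c is M-unsaturated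
          intro e heM hce
          by_cases hef : e = s(w, x)
          · subst hef
            rcases Sym2.mem_iff.mp hce with h | h
            · exact hcw h
            · exact hcx h
          · exact hcM₀ e (Finset.mem_erase.mpr ⟨hef, heM⟩) hce
        · -- alternation
          intro i hi
          simp only [SimpleGraph.Walk.edges_cons, List.length_cons] at hi
          match i with
          | 0 =>
            simp only [SimpleGraph.Walk.edges_cons, List.get_eq_getElem,
              List.getElem_cons_zero]
            simp [he'M, Nat.odd_iff]
          | 1 =>
            simp only [SimpleGraph.Walk.edges_cons, List.get_eq_getElem,
              List.getElem_cons_succ, List.getElem_cons_zero]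
            simp [hfM]
          | (k + 2) =>
            have hk : k < P.edges.length := by omega
            have hget : (SimpleGraph.Walk.cons hadj
                (SimpleGraph.Walk.cons hadj2 P)).edges.get ⟨k + 2, by
                  simp only [SimpleGraph.Walk.edges_cons, List.length_cons]; omega⟩
                = P.edges.get ⟨k, hk⟩ := by
              simp [SimpleGraph.Walk.edges_cons, List.get_eq_getElem]
            rw [hget]
            have htrans : (P.edges.get ⟨k, hk⟩ ∈ M₀ ↔ P.edges.get ⟨k, hk⟩ ∈ M) :=
              hMM₀ _ (hPed _ (List.get_mem _ _))
            rw [← htrans, hP_alt k hk]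
            rw [Nat.odd_iff, Nat.odd_iff]
            omega
      · -- edges in the symmetric difference
        intro e he
        simp only [SimpleGraph.Walk.edges_cons, List.mem_cons] at he
        rcases he with rfl | rfl | h
        · exact Finset.mem_union_right _ (Finset.mem_sdiff.mpr ⟨he'M', he'M⟩)
        · exact Finset.mem_union_left _ (Finset.mem_sdiff.mpr ⟨hfM, hfM'⟩)
        · exact hpΔ _ (hPed _ h)
    · -- neither endpoint is x : p itself is M-augmenting
      push_neg at hax
      refine ⟨a, b, p, ⟨hp_path, hp_odd, ?_, ?_, ?_⟩, hpΔ⟩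
      · intro e heM hae
        by_cases hef : e = s(w, x)
        · subst hef
          rcases Sym2.mem_iff.mp hae with h | h
          · exact hwp (h ▸ SimpleGraph.Walk.start_mem_support p)
          · exact hax.1 h
        · exact hpa e (Finset.mem_erase.mpr ⟨hef, heM⟩) hae
      · intro e heM hbe
        by_cases hef : e = s(w, x)
        · subst hef
          rcases Sym2.mem_iff.mp hbe with h | h
          · exact hwp (h ▸ SimpleGraph.Walk.end_mem_support p)
          · exact hax.2 h
        · exact hpb e (Finset.mem_erase.mpr ⟨hef, heM⟩) hbe
      · intro i hi
        rw [← hMM₀ _ (List.get_mem _ _)]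
        exact hp_alt i hi
  · -- w is M-unsaturated : the single edge s(u,w) is an augmenting path
    push_neg at hw
    refine ⟨u, w, SimpleGraph.Walk.cons hadj SimpleGraph.Walk.nil, ?_, ?_⟩
    · refine ⟨?_, ?_, huunsat, hw, ?_⟩
      · simp [SimpleGraph.Walk.isPath_def, hune]
      · simp [Nat.odd_iff]
      · intro i hi
        simp only [SimpleGraph.Walk.edges_cons, SimpleGraph.Walk.edges_nil,
          List.length_cons, List.length_nil] at hi
        have : i = 0 := by omega
        subst this
        simp [he'M, Nat.odd_iff]
    · intro e he
      simp only [SimpleGraph.Walk.edges_cons, SimpleGraph.Walk.edges_nil,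
        List.mem_cons, List.not_mem_nil, or_false] at he
      subst he
      exact Finset.mem_union_right _ (Finset.mem_sdiff.mpr ⟨he'M', he'M⟩)

lemma berge_all : ∀ (n : ℕ) (M M' : Finset (Sym2 V)), M.card = n →
    IsMatchingOn G M → IsMatchingOn G M' → M.card < M'.card →
    ∃ (u v : V) (p : G.Walk u v), IsAugPath G M p ∧
      ∀ e ∈ p.edges, e ∈ (M \ M') ∪ (M' \ M) := by
  intro n
  induction n using Nat.strong_induction_on with
  | _ n ihn =>
    rintro M M' rfl hM hM' hcard
    exact berge_core M M'
      (fun N N' hlt hN hN' hc => ihn N.card hlt N N' rfl hN hN' hc) hM hM' hcard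

end BergeAux

/-- If `M'` is a matching larger than the matching `M`, then the symmetric difference
`M Δ M'` contains an `M`-augmenting path. -/
theorem stmt4 {V : Type*} [DecidableEq V] (G : SimpleGraph V) (M M' : Finset (Sym2 V))
    (hM : IsMatchingOn G M) (hM' : IsMatchingOn G M') (hcard : M.card < M'.card) :
    ∃ (u v : V) (p : G.Walk u v), IsAugPath G M p ∧
      ∀ e ∈ p.edges, e ∈ (M \ M') ∪ (M' \ M) := by
  exact BergeAux.berge_all M.card M M' rfl hM hM' hcard
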